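/- Fix a unit vector n ∈ ℝ³ and constants b, c, s > 0 with 4cs > b. Let H_n(Q) = bs(Q - (nn·Q + Q·nn) + (2/3)(Q:nn)I) + 2cs²(Q:nn)(nn - I/3) on symmetric traceless matrices, and define M(Q) = (1/(bs))(Q - (nn·Q + Q·nn) + (2/3)(Q:nn)I) + ((4b + 2cs)/(bs(4cs - b)))(Q:nn)(nn - I/3). Then for every symmetric traceless Q satisfying Q:(n⊗m + m⊗n) = 0 for all m ⊥ n (i.e., Q orthogonal to the kernel of H_n), we have M(H_n(Q)) = Q. -/

import Mathlib

open Matrix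

noncomputable def frob (A B : Matrix (Fin 3) (Fin 3) ℝ) : ℝ := ∑ i, ∑ j, A i j * B i j

noncomputable def Hn (b c s : ℝ) (n : Fin 3 → ℝ) (Q : Matrix (Fin 3) (Fin 3) ℝ) :
    Matrix (Fin 3) (Fin 3) ℝ :=
  (b * s) • (Q - (vecMulVec n n * Q + Q * vecMulVec n n)
      + (2 / 3 * frob Q (vecMulVec n n)) • (1 : Matrix (Fin 3) (Fin 3) ℝ))
  + (2 * c * s ^ 2 * frob Q (vecMulVec n n)) •
      (vecMulVec n n - (1 / 3 : ℝ) • (1 : Matrix (Fin 3) (Fin 3) ℝ))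

noncomputable def HnInv (b c s : ℝ) (n : Fin 3 → ℝ) (Q : Matrix (Fin 3) (Fin 3) ℝ) :
    Matrix (Fin 3) (Fin 3) ℝ :=
  (1 / (b * s)) • (Q - (vecMulVec n n * Q + Q * vecMulVec n n)
      + (2 / 3 * frob Q (vecMulVec n n)) • (1 : Matrix (Fin 3) (Fin 3) ℝ))
  + ((4 * b + 2 * c * s) / (b * s * (4 * c * s - b)) * frob Q (vecMulVec n n)) •
      (vecMulVec n n - (1 / 3 : ℝ) • (1 : Matrix (Fin 3) (Fin 3) ℝ))

lemma frob_add_left (A B C : Matrix (Fin 3) (Fin 3) ℝ) :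
    frob (A + B) C = frob A C + frob B C := by
  simp [frob, add_mul, Finset.sum_add_distrib]

lemma frob_sub_left (A B C : Matrix (Fin 3) (Fin 3) ℝ) :
    frob (A - B) C = frob A C - frob B C := by
  simp [frob, sub_mul, Finset.sum_sub_distrib]

lemma frob_smul_left (r : ℝ) (A C : Matrix (Fin 3) (Fin 3) ℝ) :
    frob (r • A) C = r * frob A C := by
  simp [frob, Finset.mul_sum, mul_assoc]

theorem inverse_of_linearized_operator
    (b c s : ℝ) (hb : 0 < b) (hc : 0 < c) (hs : 0 < s) (hbc : b < 4 * c * s)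
    (n : Fin 3 → ℝ) (hn : n ⬝ᵥ n = 1)
    (Q : Matrix (Fin 3) (Fin 3) ℝ) (hsym : Qᵀ = Q) (htr : Q.trace = 0)
    (horth : ∀ m : Fin 3 → ℝ, m ⬝ᵥ n = 0 →
      frob Q (vecMulVec n m + vecMulVec m n) = 0) :
    HnInv b c s n (Hn b c s n Q) = Q := by
  have hsym' : ∀ i j, Q i j = Q j i := by
    intro i j
    have := congrFun (congrFun hsym i) j
    simpa [Matrix.transpose_apply] using this.symm
  have hn3 : n 0 * n 0 + n 1 * n 1 + n 2 * n 2 = 1 := by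
    simpa [dotProduct, Fin.sum_univ_three] using hn
  set N := vecMulVec n n with hNdef
  set q := frob Q N with hqdef
  -- orthogonality gives (Q *ᵥ n) ⬝ᵥ m = 0 for m ⊥ n
  have horth' : ∀ m : Fin 3 → ℝ, m ⬝ᵥ n = 0 → (Q *ᵥ n) ⬝ᵥ m = 0 := by
    intro m hm
    have h := horth m hm
    have hfr : frob Q (vecMulVec n m + vecMulVec m n) = 2 * ((Q *ᵥ n) ⬝ᵥ m) := by
      simp only [frob, Matrix.add_apply, vecMulVec_apply, mulVec, dotProduct,
        Fin.sum_univ_three]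
      have h01 := hsym' 0 1; have h02 := hsym' 0 2; have h12 := hsym' 1 2
      linear_combination (n 0 * m 1 - n 1 * m 0) * h01 + (n 0 * m 2 - n 2 * m 0) * h02
        + (n 1 * m 2 - n 2 * m 1) * h12
    linarith [hfr ▸ h]
  have hQnn : (Q *ᵥ n) ⬝ᵥ n = q := by
    simp only [hqdef, hNdef, frob, vecMulVec_apply, mulVec, dotProduct,
      Fin.sum_univ_three]
    ring
  have hm0n : (Q *ᵥ n - q • n) ⬝ᵥ n = 0 := by
    simp [sub_dotProduct, smul_dotProduct, hQnn, hn]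
  have hm0 : Q *ᵥ n - q • n = 0 := by
    rw [← dotProduct_self_eq_zero (v := Q *ᵥ n - q • n)]
    have h1 := horth' _ hm0n
    have h2 : n ⬝ᵥ (Q *ᵥ n - q • n) = 0 := by
      rw [dotProduct_comm]; exact hm0n
    have expand : (Q *ᵥ n - q • n) ⬝ᵥ (Q *ᵥ n - q • n)
        = (Q *ᵥ n) ⬝ᵥ (Q *ᵥ n - q • n) - q * (n ⬝ᵥ (Q *ᵥ n - q • n)) := by
      simp only [sub_dotProduct, smul_dotProduct, dotProduct_sub, dotProduct_smul,
        dotProduct, mulVec, Fin.sum_univ_three, smul_eq_mul, Pi.sub_apply, Pi.smul_apply]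
      ring
    rw [expand, h1, h2]; ring
  have hq : Q *ᵥ n = q • n := sub_eq_zero.mp hm0
  have hqj : ∀ j, Q j 0 * n 0 + Q j 1 * n 1 + Q j 2 * n 2 = q * n j := by
    intro j
    have := congrFun hq j
    simpa [mulVec, dotProduct, Fin.sum_univ_three] using this
  have hNQ : N * Q = q • N := by
    ext i j
    simp only [hNdef, Matrix.mul_apply, vecMulVec_apply, Matrix.smul_apply,
      smul_eq_mul, Fin.sum_univ_three]
    have h0 := hsym' 0 j; have h1 := hsym' 1 j; have h2 := hsym' 2 j
    linear_combination n i * hqj j + n i * n 0 * h0 + n i * n 1 * h1 + n i * n 2 * h2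
  have hQN : Q * N = q • N := by
    ext i j
    simp only [hNdef, Matrix.mul_apply, vecMulVec_apply, Matrix.smul_apply,
      smul_eq_mul, Fin.sum_univ_three]
    linear_combination n j * hqj i
  have hNN : N * N = N := by
    ext i j
    simp only [hNdef, Matrix.mul_apply, vecMulVec_apply, Fin.sum_univ_three]
    linear_combination (n i * n j) * hn3
  have fNN : frob N N = 1 := by
    simp only [hNdef, frob, vecMulVec_apply, Fin.sum_univ_three]
    linear_combination (n 0 * n 0 + n 1 * n 1 + n 2 * n 2 + 1) * hn3
  have f1N : frob (1 : Matrix (Fin 3) (Fin 3) ℝ) N = 1 := by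
    simp [hNdef, frob, vecMulVec_apply, Matrix.one_apply, Fin.sum_univ_three]
    linarith [hn3]
  have hbs : b * s ≠ 0 := by positivity
  have hden : 4 * c * s - b ≠ 0 := by linarith
  -- closed form for Hn applied to Q
  have key : Hn b c s n Q = (b * s) • Q + ((2 * c * s ^ 2 - 2 * b * s) * q) • N
      + ((2 / 3 * b * s - 2 / 3 * c * s ^ 2) * q) • (1 : Matrix (Fin 3) (Fin 3) ℝ) := by
    simp only [Hn, ← hNdef, ← hqdef, hNQ, hQN]
    module
  set σ := (b * s) * q + (2 * c * s ^ 2 - 2 * b * s) * q + (2 / 3 * b * s - 2 / 3 * c * s ^ 2) * q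
    with hσdef
  have fP : frob (Hn b c s n Q) N = σ := by
    rw [key]
    rw [frob_add_left, frob_add_left, frob_smul_left, frob_smul_left, frob_smul_left,
      ← hqdef, fNN, f1N, hσdef]
    ring
  have hNP : N * Hn b c s n Q = σ • N := by
    rw [key]
    simp only [mul_add, Matrix.mul_smul, hNQ, hNN, Matrix.mul_one, hσdef]
    module
  have hPN : Hn b c s n Q * N = σ • N := by
    rw [key]
    simp only [add_mul, Matrix.smul_mul, hQN, hNN, Matrix.one_mul, hσdef]
    module
  rw [HnInv, ← hNdef, fP, hNP, hPN, key]
  ext i j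
  simp only [Matrix.add_apply, Matrix.sub_apply, Matrix.smul_apply,
    Matrix.one_apply, smul_eq_mul, hσdef]
  have hden' : s * c * 4 - b ≠ 0 := by intro h; apply hden; linarith
  split_ifs <;> field_simp <;> ring
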